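/- Fix K ≥ 2 and a finite nonempty set S of positive integers with minimum element s_min, and consider the battery-model instance with unit conversion efficiency, no leakage, identity utility, capacity C = s_min, initial level B₀ = s_min, and final requirement B_K = s_min, where the harvested amount in slot i equals the environmental input e(i). An online algorithm is a family of functions (f_i)_{i=0}^{K−1}, where f_i maps each history (e(0),…,e(i−1)) to a spending rate s(i) = f_i(e(0),…,e(i−1)) ∈ S ∪ {0}. If an online algorithm produces a feasible spending vector for every input sequence e : {0,…,K−1} → ℕ, then on the input e* defined by e*(i) = 0 for i < K−1 and e*(K−1) = s_min the algorithm spends 0 in every slot and obtains total utility 0, whereas there exists a feasible spending vector for e* with total utility s_min. -/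
import Mathlib


/-- Battery level evolution (in `ℤ`) with unit conversion efficiency and no
leakage: initial level `B₀`, capacity `C`, harvests `Q`, spending vector `s`. -/
def batteryLevelNL (B₀ C : ℕ) (Q : ℕ → ℕ) (s : ℕ → ℕ) : ℕ → ℤ
  | 0 => (B₀ : ℤ)
  | i + 1 => min (batteryLevelNL B₀ C Q s i + (Q i : ℤ) - (s i : ℤ)) (C : ℤ)

/-- Feasibility of a spending vector `s` over horizon `K`, capacity `C`,
initial level `B₀`, final requirement `BK`, harvests `Q`, and
spending-rate set `S`, with no leakage. -/
def FeasibleNL (K C B₀ BK : ℕ) (Q : ℕ → ℕ) (S : Set ℕ) (s : ℕ → ℕ) : Prop :=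
  (∀ i < K, s i ∈ S ∪ {0}) ∧
  (∀ i < K, (s i : ℤ) ≤ batteryLevelNL B₀ C Q s i) ∧
  (∀ i ≤ K, 0 ≤ batteryLevelNL B₀ C Q s i) ∧
  (BK : ℤ) ≤ batteryLevelNL B₀ C Q s K

/-- No online algorithm has a performance guarantee when `B_K > 0`: any online
algorithm (a family of functions of the history `e(0),…,e(i−1)`) that is
feasible on every input spends `0` in every slot on the input `e*` (zero until
the last slot, then `s_min`), obtaining utility `0`, while a feasible vector
for `e*` with total utility `s_min` exists. -/
theorem online_no_guarantee
    (K : ℕ) (hK : 2 ≤ K)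
    (S : Finset ℕ) (hS : S.Nonempty) (hpos : ∀ x ∈ S, 0 < x)
    (smin : ℕ) (hsmin : smin = S.min' hS)
    (alg : (i : ℕ) → (Fin i → ℕ) → ℕ)
    (halg : ∀ e : ℕ → ℕ,
      FeasibleNL K smin smin smin e (↑S) (fun i => alg i (fun j => e j)))
    (estar : ℕ → ℕ) (hestar : ∀ i, estar i = if i = K - 1 then smin else 0) :
    (∀ i < K, alg i (fun j => estar j) = 0) ∧
    (∃ s : ℕ → ℕ, FeasibleNL K smin smin smin estar (↑S) s ∧
      ∑ i ∈ Finset.range K, s i = smin) := by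
  have hsminS : smin ∈ S := hsmin ▸ S.min'_mem hS
  have hsminpos : 0 < smin := hpos _ hsminS
  -- the all-zero input
  set e0 : ℕ → ℕ := fun _ => 0 with he0
  set a0 : ℕ → ℕ := fun i => alg i (fun j => e0 j) with ha0
  obtain ⟨hmem, hspend, hnonneg, hfinal⟩ := halg e0
  set B : ℕ → ℤ := fun i => batteryLevelNL smin smin e0 a0 i with hB
  have hBsucc : ∀ j, B (j + 1) = min (B j + ((e0 j : ℕ) : ℤ) - (a0 j : ℤ)) (smin : ℤ) :=
    fun j => rfl
  have hmono : ∀ j, B (j + 1) ≤ B j := by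
    intro j
    rw [hBsucc]
    have h1 := min_le_left (B j + ((e0 j : ℕ) : ℤ) - (a0 j : ℤ)) (smin : ℤ)
    have h0 : (0 : ℤ) ≤ (a0 j : ℤ) := Int.ofNat_nonneg _
    simp only [he0, Nat.cast_zero] at h1 ⊢
    linarith
  have hanti : ∀ m n, n ≤ m → B m ≤ B n := by
    intro m n h
    induction m with
    | zero => simp_all
    | succ k ih =>
      rcases Nat.lt_or_ge n (k + 1) with h' | h'
      · exact le_trans (hmono k) (ih (by omega))
      · have : n = k + 1 := by omega
        simp [this]
  have hstep : ∀ i, i < K → B i = smin → a0 i = 0 ∧ B (i + 1) = smin := by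
    intro i hi hBi
    have hmem' := hmem i hi
    by_cases h : a0 i = 0
    · refine ⟨h, ?_⟩
      rw [hBsucc, hBi, h]
      simp [he0]
    · exfalso
      have hS' : a0 i ∈ S := by
        rcases hmem' with h1 | h1
        · exact h1
        · exact absurd h1 h
      have hge : smin ≤ a0 i := hsmin ▸ S.min'_le _ hS'
      have hgeZ : (smin : ℤ) ≤ (a0 i : ℤ) := by exact_mod_cast hge
      have hB1 : B (i + 1) ≤ 0 := by
        have h1 := min_le_left (B i + ((e0 i : ℕ) : ℤ) - (a0 i : ℤ)) (smin : ℤ)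
        rw [← hBsucc] at h1
        rw [hBi] at h1
        simp only [he0, Nat.cast_zero] at h1
        linarith
      have hKi : B K ≤ B (i + 1) := hanti K (i + 1) hi
      have : (smin : ℤ) ≤ B K := hfinal
      have : (0 : ℤ) < smin := by exact_mod_cast hsminpos
      linarith
  have hBall : ∀ i, i < K → B i = smin := by
    intro i
    induction i with
    | zero => intro _; rfl
    | succ n ih => intro h; exact (hstep n (by omega) (ih (by omega))).2
  have ha0all : ∀ i, i < K → a0 i = 0 := fun i hi => (hstep i hi (hBall i hi)).1
  constructor
  · intro i hi
    have heq : (fun j : Fin i => estar j) = (fun j : Fin i => e0 j) := by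
      funext j
      have hj : (j : ℕ) < i := j.isLt
      have hne : (j : ℕ) ≠ K - 1 := by omega
      rw [hestar]
      simp [hne, he0]
    rw [heq]
    exact ha0all i hi
  · refine ⟨fun i => if i = K - 1 then smin else 0, ?_, ?_⟩
    · set s : ℕ → ℕ := fun i => if i = K - 1 then smin else 0 with hs
      set B' : ℕ → ℤ := fun i => batteryLevelNL smin smin estar s i with hB'
      have hB'succ : ∀ j, B' (j + 1) = min (B' j + ((estar j : ℕ) : ℤ) - (s j : ℤ)) (smin : ℤ) :=
        fun j => rfl
      have hB'pre : ∀ i, i ≤ K - 1 → B' i = smin := by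
        intro i
        induction i with
        | zero => intro _; rfl
        | succ n ih =>
          intro h
          have hn : n ≠ K - 1 := by omega
          rw [hB'succ, ih (by omega), hestar, hs]
          simp [hn]
      have hB'K : B' K = smin := by
        have hK1 : K = (K - 1) + 1 := by omega
        rw [hK1, hB'succ, hB'pre (K - 1) le_rfl, hestar, hs]
        simp
      refine ⟨?_, ?_, ?_, ?_⟩
      · intro i hi
        by_cases h : i = K - 1 <;> simp [hs, h, hsminS]
      · intro i hi
        by_cases h : i = K - 1
        · rw [show batteryLevelNL smin smin estar s i = B' i from rfl,
            h, hB'pre (K - 1) le_rfl, hs]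
          simp
        · rw [show batteryLevelNL smin smin estar s i = B' i from rfl,
            hB'pre i (by omega), hs]
          simp [h]
      · intro i hi
        rcases Nat.lt_or_ge i K with h | h
        · rw [show batteryLevelNL smin smin estar s i = B' i from rfl,
            hB'pre i (by omega)]
          positivity
        · have : i = K := by omega
          rw [show batteryLevelNL smin smin estar s i = B' i from rfl, this, hB'K]
          positivity
      · rw [show batteryLevelNL smin smin estar s K = B' K from rfl, hB'K]
    · rw [Finset.sum_ite_eq' (Finset.range K) (K - 1) (fun _ => smin)]
      simp [Nat.sub_lt (by omega : 0 < K) one_pos]
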